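/- arXiv:2303.04372 — 3 statements merged into one kernel-verified Lean document; each statement's English description precedes it below -/
import Mathlib

section
/- Let R be a unital ring, G a finite group whose order n is invertible in R, and σ, τ unital R-algebra endomorphisms of the group ring RG. Then every (σ,τ)-derivation D of RG is inner: setting γ = (1/n)·Σ_{g∈G} D(g⁻¹)·τ(g), one has D(α) = γ·τ(α) − σ(α)·γ for all α ∈ RG. -/
open MonoidAlgebra

theorem stmt_8 {R : Type*} [Ring R] {G : Type*} [Group G] [Fintype G]
    (u : Rˣ) (hu : (u : R) = (Fintype.card G : R))
    (σ τ : MonoidAlgebra R G →+* MonoidAlgebra R G)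
    (D : MonoidAlgebra R G →ₗ[R] MonoidAlgebra R G)
    (hD : ∀ x y : MonoidAlgebra R G, D (x * y) = D x * τ y + σ x * D y) :
    ∀ α : MonoidAlgebra R G,
      D α = ((↑u⁻¹ : R) • ∑ g : G, D (of R G g⁻¹) * τ (of R G g)) * τ α -
        σ α * ((↑u⁻¹ : R) • ∑ g : G, D (of R G g⁻¹) * τ (of R G g)) := by
  intro α
  set γ : MonoidAlgebra R G := ∑ g : G, D (of R G g⁻¹) * τ (of R G g) with hγ
  -- centrality of u⁻¹
  have hcent : ∀ r : R, (↑u⁻¹ : R) * r = r * ↑u⁻¹ := fun r =>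
    ((hu ▸ (Nat.cast_commute (Fintype.card G) r) : Commute (↑u : R) r).units_inv_left).eq
  -- D 1 = 0
  have hD1 : D 1 = 0 := by
    have h := hD 1 1
    simp only [mul_one, map_one, one_mul] at h
    exact (left_eq_add.mp h)
  -- D kills central scalars
  have hDc : ∀ r : R, D (single (1:G) r) = 0 := by
    intro r
    have h : (single (1:G) r : MonoidAlgebra R G) = r • 1 := by
      rw [MonoidAlgebra.one_def, MonoidAlgebra.smul_single, smul_eq_mul, mul_one]
    rw [h, map_smul, hD1, smul_zero]
  have hcomm : ∀ (r : R) (g : G),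
      (single (1:G) r : MonoidAlgebra R G) * of R G g = of R G g * single (1:G) r := by
    intro r g
    simp [of_apply, MonoidAlgebra.single_mul_single]
  have hDsingle : ∀ (g : G) (r : R),
      D (single g r) = σ (single (1:G) r) * D (of R G g) := by
    intro g r
    have hsr : (single g r : MonoidAlgebra R G) = single (1:G) r * of R G g := by
      simp [of_apply, MonoidAlgebra.single_mul_single]
    rw [hsr, hD, hDc, zero_mul, zero_add]
  -- key group-element identity
  have hE : ∀ h : G, γ * τ (of R G h) = (↑u : R) • D (of R G h) + σ (of R G h) * γ := by
    intro h
    have step1 : γ * τ (of R G h) = ∑ g : G, D (of R G g⁻¹) * τ (of R G (g * h)) := by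
      rw [hγ, Finset.sum_mul]
      refine Finset.sum_congr rfl fun g _ => ?_
      rw [mul_assoc, ← map_mul, ← map_mul (of R G)]
    have step2 : (∑ g : G, D (of R G g⁻¹) * τ (of R G (g * h)))
        = ∑ g : G, D (of R G (h * g⁻¹)) * τ (of R G g) := by
      refine Fintype.sum_equiv (Equiv.mulRight h) _ _ fun g => ?_
      simp only [Equiv.coe_mulRight]
      congr 2
      group
    have step3 : ∀ g : G, D (of R G (h * g⁻¹)) * τ (of R G g)
        = D (of R G h) + σ (of R G h) * (D (of R G g⁻¹) * τ (of R G g)) := by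
      intro g
      rw [map_mul (of R G), hD, add_mul, mul_assoc (D (of R G h)), ← map_mul τ,
        ← map_mul (of R G), inv_mul_cancel, map_one, map_one, mul_one, mul_assoc]
    rw [step1, step2]
    simp only [step3]
    rw [Finset.sum_add_distrib, Finset.sum_const, ← Finset.mul_sum, Finset.card_univ, ← hγ,
      hu, Nat.cast_smul_eq_nsmul]
  -- scalars commute with γ
  have hDscal : ∀ r : R, γ * τ (single (1:G) r) = σ (single (1:G) r) * γ := by
    intro r
    have key : ∀ g : G, D (of R G g⁻¹) * τ (single (1:G) r)
        = σ (single (1:G) r) * D (of R G g⁻¹) := by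
      intro g
      have e1 := hD (of R G g⁻¹) (single (1:G) r)
      have e2 := hD (single (1:G) r) (of R G g⁻¹)
      rw [hDc, mul_zero, add_zero] at e1
      rw [hDc, zero_mul, zero_add] at e2
      rw [hcomm r g⁻¹] at e2
      rw [← e1, e2]
    rw [hγ, Finset.sum_mul, Finset.mul_sum]
    refine Finset.sum_congr rfl fun g _ => ?_
    rw [mul_assoc, ← map_mul τ, ← hcomm, map_mul τ, ← mul_assoc, key, mul_assoc]
  -- smul by ↑u commutes with left multiplication
  have husmul : ∀ x y : MonoidAlgebra R G, x * ((↑u:R) • y) = (↑u:R) • (x * y) := by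
    intro x y
    rw [hu, Nat.cast_smul_eq_nsmul, Nat.cast_smul_eq_nsmul, mul_smul_comm]
  have hE' : ∀ h : G, (↑u : R) • D (of R G h) = γ * τ (of R G h) - σ (of R G h) * γ := by
    intro h
    rw [hE h]
    abel
  -- main identity (times u) on monomials
  have hsingle : ∀ (g : G) (r : R),
      (↑u:R) • D (single g r) = γ * τ (single g r) - σ (single g r) * γ := by
    intro g r
    have hsr : (single g r : MonoidAlgebra R G) = single (1:G) r * of R G g := by
      simp [of_apply, MonoidAlgebra.single_mul_single]
    rw [hDsingle g r, ← husmul, hE', hsr, map_mul σ, map_mul τ,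
      ← mul_assoc γ (τ (single (1:G) r)) (τ (of R G g)), hDscal, mul_sub]
    simp only [mul_assoc]
  -- main identity (times u) everywhere, by additivity
  have h0 : (↑u:R) • D (0 : MonoidAlgebra R G) = γ * τ 0 - σ 0 * γ := by simp
  have hadd : ∀ x y : MonoidAlgebra R G,
      (↑u:R) • D x = γ * τ x - σ x * γ → (↑u:R) • D y = γ * τ y - σ y * γ →
      (↑u:R) • D (x + y) = γ * τ (x + y) - σ (x + y) * γ := by
    intro x y hx hy
    rw [map_add, map_add, map_add, smul_add, mul_add, add_mul, hx, hy]
    abel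
  have main : ∀ β : MonoidAlgebra R G, (↑u:R) • D β = γ * τ β - σ β * γ := by
    intro β
    induction β using MonoidAlgebra.induction with
    | zero => exact h0
    | single_add g r f _ _ ih => exact hadd _ _ (hsingle g r) ih
  -- conclude
  have hmain := main α
  have hrs : σ α * ((↑u⁻¹:R) • γ) = (↑u⁻¹:R) • (σ α * γ) := by
    have hz : ∀ z : MonoidAlgebra R G, (↑u⁻¹:R) • z = z * single (1:G) (↑u⁻¹:R) := by
      intro z
      ext a
      rw [MonoidAlgebra.mul_single_one_apply, MonoidAlgebra.coeff_smul_apply, smul_eq_mul, hcent]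
    rw [hz, hz, mul_assoc]
  rw [smul_mul_assoc, hrs, ← smul_sub, ← hmain, smul_smul, Units.inv_mul, one_smul]
end

section
/- Let R be a commutative unital ring, G a group, and σ, τ group endomorphisms of G extended R-linearly to algebra endomorphisms of the group ring RG. For each (σ,τ)-conjugacy class C of G of finite size, let Ĉ = Σ_{g∈C} g ∈ RG be its class sum. Then the class sums of the finite (σ,τ)-conjugacy classes form an R-basis of the (σ,τ)-center Z_{(σ,τ)}(RG) = {z ∈ RG : z·τ(α) = σ(α)·z for all α ∈ RG}. -/
/-- The (σ,τ)-center `{z ∈ RG : z·τ(α) = σ(α)·z for all α}` as an `R`-submodule. -/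
def sigmaTauCenter (R : Type*) (G : Type*) [CommRing R] [Group G]
    (σ' τ' : MonoidAlgebra R G →ₐ[R] MonoidAlgebra R G) :
    Submodule R (MonoidAlgebra R G) where
  carrier := {z | ∀ α : MonoidAlgebra R G, z * τ' α = σ' α * z}
  add_mem' := by
    intro a b ha hb α
    rw [add_mul, mul_add, ha α, hb α]
  zero_mem' := by intro α; simp
  smul_mem' := by
    intro c a ha α
    rw [smul_mul_assoc, mul_smul_comm, ha α]

section Aux

variable {R G : Type*} [CommRing R] [Group G] (σ τ : G →* G)

/-- The (σ,τ)-conjugacy class of `x`. -/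
def stClass (x : G) : Set G := {z : G | ∃ g : G, z = σ g * x * (τ g)⁻¹}

lemma mem_stClass_self (x : G) : x ∈ stClass σ τ x := ⟨1, by simp⟩

lemma stClass_eq_of_mem {x y : G} (h : y ∈ stClass σ τ x) :
    stClass σ τ y = stClass σ τ x := by
  obtain ⟨g, rfl⟩ := h
  ext z
  constructor
  · rintro ⟨h, rfl⟩
    exact ⟨h * g, by simp [map_mul, mul_assoc]⟩
  · rintro ⟨h, rfl⟩
    refine ⟨h * g⁻¹, ?_⟩
    simp [map_mul, mul_assoc]

lemma mul_mem_stClass {x y : G} (h : y ∈ stClass σ τ x) (g : G) :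
    σ g * y * (τ g)⁻¹ ∈ stClass σ τ x := by
  rw [← stClass_eq_of_mem σ τ h]
  exact ⟨g, rfl⟩

lemma mem_sigmaTauCenter_iff (z : MonoidAlgebra R G) :
    z ∈ sigmaTauCenter R G (MonoidAlgebra.mapDomainAlgHom R R σ)
        (MonoidAlgebra.mapDomainAlgHom R R τ) ↔
      ∀ g x : G, z.coeff (σ g * x * (τ g)⁻¹) = z.coeff x := by
  constructor
  · intro h g x
    have h1 := h (MonoidAlgebra.single g 1)
    have h2 : z * MonoidAlgebra.single (τ g) (1:R) =
        MonoidAlgebra.single (σ g) (1:R) * z := by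
      simpa [MonoidAlgebra.mapDomainAlgHom] using h1
    have h3 : (z * MonoidAlgebra.single (τ g) (1:R)).coeff (σ g * x) =
        (MonoidAlgebra.single (σ g) (1:R) * z).coeff (σ g * x) := by rw [h2]
    simp only [MonoidAlgebra.coeff_mul_single_apply, MonoidAlgebra.coeff_single_mul_apply] at h3
    simpa [mul_assoc] using h3
  · intro h α
    induction α using MonoidAlgebra.induction with
    | zero => simp
    | single_add a r f _ _ ih =>
      rw [map_add, map_add, mul_add, add_mul, ih]
      congr 1
      have hs : ∀ (ρ : G →* G), MonoidAlgebra.mapDomainAlgHom R R ρ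
          (MonoidAlgebra.single a r) = MonoidAlgebra.single (ρ a) r := by
        intro ρ; simp [MonoidAlgebra.mapDomainAlgHom]
      rw [hs σ, hs τ]
      ext y
      rw [MonoidAlgebra.coeff_mul_single_apply, MonoidAlgebra.coeff_single_mul_apply]
      have h4 := h a ((σ a)⁻¹ * y)
      rw [show σ a * ((σ a)⁻¹ * y) * (τ a)⁻¹ = y * (τ a)⁻¹ by group] at h4
      rw [h4, mul_comm]

open Classical in
lemma classSum_apply (s : Finset G) (x : G) :
    (∑ g ∈ s, MonoidAlgebra.of R G g).coeff x = if x ∈ s then (1:R) else 0 := by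
  classical
  rw [MonoidAlgebra.coeff_sum, Finsupp.finset_sum_apply]
  simp only [MonoidAlgebra.of_apply, MonoidAlgebra.coeff_single, Finsupp.single_apply]
  rw [Finset.sum_ite_eq' s x (fun _ => (1:R))]

end Aux

theorem stmt_14 {R G : Type*} [CommRing R] [Group G] (σ τ : G →* G) :
    ∃ b : Module.Basis
        {C : Set G // (∃ x : G, C = {z : G | ∃ g : G, z = σ g * x * (τ g)⁻¹}) ∧ C.Finite} R
        (sigmaTauCenter R G (MonoidAlgebra.mapDomainAlgHom R R σ)
          (MonoidAlgebra.mapDomainAlgHom R R τ)),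
      ∀ i, (b i : MonoidAlgebra R G) =
        ∑ g ∈ i.prop.2.toFinset, MonoidAlgebra.of R G g := by
  classical
  set Z := sigmaTauCenter R G (MonoidAlgebra.mapDomainAlgHom R R σ)
    (MonoidAlgebra.mapDomainAlgHom R R τ) with hZ
  set c : {C : Set G // (∃ x : G, C = {z : G | ∃ g : G, z = σ g * x * (τ g)⁻¹}) ∧ C.Finite}
      → MonoidAlgebra R G := fun i => ∑ g ∈ i.prop.2.toFinset, MonoidAlgebra.of R G g
    with hc
  have hcapply : ∀ (i : {C : Set G // (∃ x : G, C = {z : G | ∃ g : G, z = σ g * x * (τ g)⁻¹})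
      ∧ C.Finite}) (x : G), (c i).coeff x = if x ∈ i.1 then (1:R) else 0 := by
    intro i x
    rw [hc, classSum_apply]
    simp [Set.Finite.mem_toFinset]
  have hcl : ∀ (i : {C : Set G // (∃ x : G, C = {z : G | ∃ g : G, z = σ g * x * (τ g)⁻¹})
      ∧ C.Finite}), ∀ x ∈ i.1, i.1 = stClass σ τ x := by
    rintro ⟨C, ⟨x₀, rfl⟩, hfin⟩ x hx
    exact (stClass_eq_of_mem σ τ hx).symm
  -- each class sum lies in Z
  have hmem : ∀ i, c i ∈ Z := by
    intro i
    rw [hZ, mem_sigmaTauCenter_iff]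
    intro g x
    rw [hcapply, hcapply]
    congr 1
    obtain ⟨x₀, hC⟩ := i.prop.1
    have hC' : i.1 = stClass σ τ x₀ := hC
    rw [hC']
    apply propext
    constructor
    · intro hx
      have := mul_mem_stClass σ τ hx g⁻¹
      simpa [mul_assoc] using this
    · intro hx
      exact mul_mem_stClass σ τ hx g
  set b : _ → Z := fun i => ⟨c i, hmem i⟩ with hb
  -- linear independence of c
  have hli : LinearIndependent R c := by
    rw [linearIndependent_iff']
    intro s l hsum i hi
    obtain ⟨x₀, hC⟩ := i.prop.1
    have hx₀ : x₀ ∈ i.1 := by rw [hC]; exact mem_stClass_self σ τ x₀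
    have h5 : (∑ i ∈ s, l i • c i).coeff x₀ = (0 : MonoidAlgebra R G).coeff x₀ := by rw [hsum]
    rw [MonoidAlgebra.coeff_sum, Finsupp.finset_sum_apply] at h5
    simp only [Finsupp.smul_apply, smul_eq_mul, MonoidAlgebra.coeff_zero, Finsupp.coe_zero, Pi.zero_apply] at h5
    rw [Finset.sum_eq_single i (fun j _ hji => ?_) (fun h => absurd hi h)] at h5
    · rw [MonoidAlgebra.coeff_smul, Finsupp.smul_apply, hcapply, if_pos hx₀, smul_eq_mul, mul_one] at h5
      exact h5
    · rw [MonoidAlgebra.coeff_smul, Finsupp.smul_apply, hcapply, if_neg, smul_zero]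
      intro hx₀j
      apply hji
      apply Subtype.ext
      rw [hcl j x₀ hx₀j, hcl i x₀ hx₀]
  -- spanning
  have hspan : ∀ n (z : MonoidAlgebra R G), z ∈ Z → z.coeff.support.card ≤ n →
      z ∈ Submodule.span R (Set.range c) := by
    intro n
    induction n with
    | zero =>
      intro z _ hcard
      have : z = 0 := by
        rw [← MonoidAlgebra.coeff_eq_zero, ← Finsupp.support_eq_empty, ← Finset.card_eq_zero]
        omega
      rw [this]; exact Submodule.zero_mem _
    | succ n ih =>
      intro z hzZ hcard
      rcases eq_or_ne z 0 with rfl | hz0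
      · exact Submodule.zero_mem _
      obtain ⟨x, hx⟩ : ∃ x, x ∈ z.coeff.support := (Finsupp.support_nonempty_iff.mpr (MonoidAlgebra.coeff_eq_zero.not.mpr hz0))
      have hzc := (mem_sigmaTauCenter_iff σ τ z).mp hzZ
      have hconst : ∀ y ∈ stClass σ τ x, z.coeff y = z.coeff x := by
        rintro y ⟨g, rfl⟩
        exact hzc g x
      have hsub : stClass σ τ x ⊆ ↑z.coeff.support := by
        intro y hy
        rw [Finset.mem_coe, Finsupp.mem_support_iff, hconst y hy]
        exact Finsupp.mem_support_iff.mp hx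
      have hfin : (stClass σ τ x).Finite := z.coeff.support.finite_toSet.subset hsub
      set i : {C : Set G // (∃ x : G, C = {z : G | ∃ g : G, z = σ g * x * (τ g)⁻¹}) ∧ C.Finite}
        := ⟨stClass σ τ x, ⟨x, rfl⟩, hfin⟩ with hi
      set z' : MonoidAlgebra R G := z - z.coeff x • c i with hz'
      have hz'Z : z' ∈ Z := Submodule.sub_mem _ hzZ (Submodule.smul_mem _ _ (hmem i))
      have hz'y : ∀ y, z'.coeff y = z.coeff y - (if y ∈ stClass σ τ x then z.coeff x else 0) := by
        intro y
        rw [hz', MonoidAlgebra.coeff_sub, Finsupp.sub_apply, MonoidAlgebra.coeff_smul, Finsupp.smul_apply, hcapply i y]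
        have : (i : Set G) = stClass σ τ x := rfl
        rw [this]
        simp [smul_eq_mul, mul_ite]
      have hz'supp : z'.coeff.support ⊆ z.coeff.support.erase x := by
        intro y hy
        rw [Finsupp.mem_support_iff] at hy
        by_cases hyC : y ∈ stClass σ τ x
        · exact absurd (by rw [hz'y y, if_pos hyC, hconst y hyC, sub_self]) hy
        · rw [Finset.mem_erase]
          constructor
          · rintro rfl; exact hyC (mem_stClass_self σ τ y)
          · rw [Finsupp.mem_support_iff]
            rwa [hz'y y, if_neg hyC, sub_zero] at hy
      have hcard' : z'.coeff.support.card ≤ n := by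
        have h1 := Finset.card_le_card hz'supp
        have h2 := Finset.card_erase_of_mem hx
        omega
      have := ih z' hz'Z hcard'
      have hzeq : z = z' + z.coeff x • c i := by rw [hz', sub_add_cancel]
      rw [hzeq]
      exact Submodule.add_mem _ this
        (Submodule.smul_mem _ _ (Submodule.subset_span ⟨i, rfl⟩))
  -- transfer to the submodule
  have hlib : LinearIndependent R b := by
    apply LinearIndependent.of_comp Z.subtype
    exact hli
  have hspanb : ⊤ ≤ Submodule.span R (Set.range b) := by
    rintro z -
    have h1 : (z : MonoidAlgebra R G) ∈ Submodule.span R (Set.range c) :=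
      hspan z.1.coeff.support.card z.1 z.2 le_rfl
    have h2 : Set.range c = Z.subtype '' Set.range b := by
      rw [← Set.range_comp]; rfl
    rw [h2, ← Submodule.map_span] at h1
    obtain ⟨w, hw, hwz⟩ := h1
    have : w = z := Subtype.ext hwz
    rwa [this] at hw
  refine ⟨Module.Basis.mk hlib hspanb, fun i => ?_⟩
  rw [Module.Basis.mk_apply]
end

section
/- Let F be a field of characteristic 0, G a finite abelian group, and σ a group endomorphism of G extended F-linearly to the group algebra FG. Then FG has no non-zero σ-derivations, i.e., every F-linear map D : FG → FG satisfying D(xy) = D(x)σ(y) + σ(x)D(y) is zero. -/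
theorem stmt_16 {F G : Type*} [Field F] [CharZero F] [CommGroup G] [Fintype G]
    (σ : G →* G)
    (D : MonoidAlgebra F G →ₗ[F] MonoidAlgebra F G)
    (hD : ∀ x y : MonoidAlgebra F G,
      D (x * y) = D x * MonoidAlgebra.mapDomainAlgHom F F σ y +
        MonoidAlgebra.mapDomainAlgHom F F σ x * D y) :
    D = 0 := by
  have hσ : ∀ g : G, MonoidAlgebra.mapDomainAlgHom F F σ (MonoidAlgebra.of F G g)
      = MonoidAlgebra.of F G (σ g) := by
    intro g; simp [MonoidAlgebra.mapDomainAlgHom]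
  have hD1 : D 1 = 0 := by
    have h := hD 1 1
    simp only [mul_one, one_mul, map_one] at h
    exact left_eq_add.mp h
  -- key induction
  have key : ∀ (g : G) (n : ℕ),
      D (MonoidAlgebra.of F G g ^ (n + 1))
        = (n + 1) • (MonoidAlgebra.of F G (σ g) ^ n * D (MonoidAlgebra.of F G g)) := by
    intro g n
    induction n with
    | zero => simp
    | succ n ih =>
      have h := hD (MonoidAlgebra.of F G g ^ (n + 1)) (MonoidAlgebra.of F G g)
      rw [← pow_succ] at h
      rw [h, ih, hσ, map_pow, hσ]
      rw [succ_nsmul]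
      ring_nf
  have hof : ∀ g : G, D (MonoidAlgebra.of F G g) = 0 := by
    intro g
    obtain ⟨m, hm⟩ : ∃ m, orderOf g = m + 1 :=
      ⟨orderOf g - 1, (Nat.succ_pred_eq_of_pos (orderOf_pos g)).symm⟩
    have h0 : D (MonoidAlgebra.of F G g ^ (m + 1)) = 0 := by
      rw [← map_pow, ← hm, pow_orderOf_eq_one, map_one, hD1]
    rw [key g m] at h0
    have h1 : MonoidAlgebra.of F G (σ g) ^ m * D (MonoidAlgebra.of F G g) = 0 := by
      have hc : ((m + 1 : ℕ) : F) ≠ 0 := by exact_mod_cast Nat.succ_ne_zero m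
      have := h0
      rw [← Nat.cast_smul_eq_nsmul F] at this
      push_cast at this hc
      exact (smul_eq_zero.mp this).resolve_left hc
    have hu : MonoidAlgebra.of F G ((σ g)⁻¹ ^ m) * MonoidAlgebra.of F G (σ g) ^ m = 1 := by
      rw [← map_pow, ← map_mul, inv_pow, inv_mul_cancel, map_one]
    calc D (MonoidAlgebra.of F G g)
        = (MonoidAlgebra.of F G ((σ g)⁻¹ ^ m) * MonoidAlgebra.of F G (σ g) ^ m)
            * D (MonoidAlgebra.of F G g) := by rw [hu, one_mul]
      _ = MonoidAlgebra.of F G ((σ g)⁻¹ ^ m)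
            * (MonoidAlgebra.of F G (σ g) ^ m * D (MonoidAlgebra.of F G g)) := by ring
      _ = 0 := by rw [h1, mul_zero]
  apply MonoidAlgebra.lhom_ext'
  intro g
  apply LinearMap.ext
  intro c
  show D (MonoidAlgebra.single g c) = 0
  have h2 : (MonoidAlgebra.single g c : MonoidAlgebra F G) = c • MonoidAlgebra.of F G g := by
    rw [MonoidAlgebra.smul_of]
  rw [h2, map_smul, hof, smul_zero]
end
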